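/- Let G be a connected simple graph on n vertices with a vertex weight ω. Then LE_ω(G) ≤ n·MD_ω(G) + E(G), i.e., the weighted Laplacian energy of G is at most n times the mean deviation of the weights plus the (adjacency) energy of G. -/

import Mathlib

open Matrix in
lemma aux1 {n : ℕ} (W : Matrix (Fin n) (Fin n) ℝ) (hW : star W * W = 1)
    (s : Fin n → ℝ) (hs : ∀ j, |s j| ≤ 1) (i : Fin n) :
    |(star W * Matrix.diagonal s * W) i i| ≤ 1 := by
  rw [Matrix.star_eq_conjTranspose] at hW ⊢
  have hcol : ∑ j, (W j i) ^ 2 = 1 := by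
    have := congrFun (congrFun hW i) i
    simpa [Matrix.mul_apply, Matrix.conjTranspose_apply, sq] using this
  have hentry : (Wᴴ * Matrix.diagonal s * W) i i = ∑ k, s k * (W k i) ^ 2 := by
    rw [Matrix.mul_assoc]
    simp only [Matrix.mul_apply, Matrix.diagonal_apply, Matrix.conjTranspose_apply,
      RCLike.star_def, RCLike.conj_to_real, ite_mul, zero_mul, Finset.sum_ite_eq,
      Finset.mem_univ, if_pos]
    exact Finset.sum_congr rfl fun k _ => by ring
  rw [hentry]
  calc |∑ k, s k * (W k i) ^ 2| ≤ ∑ k, |s k * (W k i) ^ 2| := Finset.abs_sum_le_sum_abs _ _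
    _ ≤ ∑ k, (W k i) ^ 2 := by
        apply Finset.sum_le_sum
        intro k _
        rw [abs_mul, abs_pow, sq_abs]
        exact mul_le_of_le_one_left (sq_nonneg _) (hs k)
    _ = 1 := hcol

open Matrix in
lemma aux2 {n : ℕ} {M : Matrix (Fin n) (Fin n) ℝ} (hM : M.IsHermitian)
    (S : Matrix (Fin n) (Fin n) ℝ) :
    (M * S).trace = ∑ i, hM.eigenvalues i *
      ((star (hM.eigenvectorUnitary : Matrix (Fin n) (Fin n) ℝ)) * S *
        (hM.eigenvectorUnitary : Matrix (Fin n) (Fin n) ℝ)) i i := by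
  set U : Matrix (Fin n) (Fin n) ℝ := (hM.eigenvectorUnitary : Matrix (Fin n) (Fin n) ℝ)
  have hdiag : (RCLike.ofReal ∘ hM.eigenvalues : Fin n → ℝ) = hM.eigenvalues := by
    funext i; simp
  conv_lhs => rw [hM.spectral_theorem]
  rw [hdiag]
  rw [Unitary.conjStarAlgAut_apply]
  rw [Matrix.mul_assoc, Matrix.mul_assoc, Matrix.trace_mul_comm, ← Matrix.mul_assoc,
    Matrix.mul_assoc, Matrix.mul_assoc]
  simp [Matrix.trace, Matrix.diag, Matrix.diagonal_mul, Matrix.mul_assoc]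
  rfl


open scoped BigOperators

/-- For a connected graph `G` on `n` vertices with vertex weight `ω`,
`LE_ω(G) ≤ n · MD_ω(G) + E(G)`. -/
theorem weighted_laplacian_energy_le
    (n : ℕ) (hn : 0 < n) (G : SimpleGraph (Fin n)) [DecidableRel G.Adj]
    (hconn : G.Connected)
    (ω : Fin n → ℝ) (hω : ∀ i, 0 < ω i)
    (hL : (Matrix.diagonal ω - G.adjMatrix ℝ).IsHermitian)
    (hA : (G.adjMatrix ℝ).IsHermitian) :
    ∑ i, |hL.eigenvalues i - (∑ j, ω j) / n| ≤
      (n : ℝ) * ((1 / (n : ℝ)) * ∑ i, |ω i - (∑ j, ω j) / n|) +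
        ∑ i, |hA.eigenvalues i| := by
  have hn' : (n : ℝ) ≠ 0 := Nat.cast_ne_zero.mpr hn.ne'
  set c : ℝ := (∑ j, ω j) / n with hc
  set U : Matrix (Fin n) (Fin n) ℝ := (hL.eigenvectorUnitary : Matrix (Fin n) (Fin n) ℝ)
    with hU
  have hU1 : star U * U = 1 := Matrix.mem_unitaryGroup_iff'.mp hL.eigenvectorUnitary.2
  have hU2 : U * star U = 1 := Matrix.mem_unitaryGroup_iff.mp hL.eigenvectorUnitary.2
  set V : Matrix (Fin n) (Fin n) ℝ := (hA.eigenvectorUnitary : Matrix (Fin n) (Fin n) ℝ)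
    with hV
  have hV1 : star V * V = 1 := Matrix.mem_unitaryGroup_iff'.mp hA.eigenvectorUnitary.2
  set s : Fin n → ℝ := fun i => if 0 ≤ hL.eigenvalues i - c then 1 else -1 with hs
  have hs1 : ∀ i, |s i| ≤ 1 := by
    intro i; rw [hs]; dsimp only; split <;> simp
  have hsabs : ∀ i, s i * (hL.eigenvalues i - c) = |hL.eigenvalues i - c| := by
    intro i; rw [hs]; dsimp only
    by_cases h : 0 ≤ hL.eigenvalues i - c
    · rw [if_pos h, one_mul, abs_of_nonneg h]
    · rw [if_neg h, abs_of_neg (lt_of_not_ge h)]; ring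
  set S : Matrix (Fin n) (Fin n) ℝ := U * Matrix.diagonal s * star U with hS
  have hsand : star U * S * U = Matrix.diagonal s := by
    rw [hS]
    calc star U * (U * Matrix.diagonal s * star U) * U
        = (star U * U) * Matrix.diagonal s * (star U * U) := by
          simp only [Matrix.mul_assoc]
      _ = Matrix.diagonal s := by rw [hU1]; simp
  have h1 : ((Matrix.diagonal ω - G.adjMatrix ℝ) * S).trace = ∑ i, hL.eigenvalues i * s i := by
    rw [aux2 hL S, ← hU, hsand]
    simp [Matrix.diagonal_apply_eq]
  have h2 : S.trace = ∑ i, s i := by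
    rw [hS, Matrix.trace_mul_cycle, hU1, one_mul, Matrix.trace_diagonal]
  have hSentry : ∀ i, |S i i| ≤ 1 := by
    intro i
    have h := aux1 (star U) (by rw [star_star]; exact hU2) s hs1 i
    rw [star_star] at h
    rw [hS]
    exact h
  have h3 : |((G.adjMatrix ℝ) * S).trace| ≤ ∑ i, |hA.eigenvalues i| := by
    rw [aux2 hA S, ← hV]
    refine le_trans (Finset.abs_sum_le_sum_abs _ _) (Finset.sum_le_sum fun i _ => ?_)
    rw [abs_mul]
    have hb : |(star V * S * V) i i| ≤ 1 := by
      have hW : star V * S * V = star (star U * V) * Matrix.diagonal s * (star U * V) := by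
        rw [hS]
        simp only [Matrix.star_eq_conjTranspose, Matrix.conjTranspose_mul,
          Matrix.conjTranspose_conjTranspose, Matrix.mul_assoc]
      rw [hW]
      refine aux1 _ ?_ s hs1 i
      calc star (star U * V) * (star U * V) = star V * (U * star U) * V := by
            simp only [star_mul, star_star, Matrix.mul_assoc]
        _ = 1 := by rw [hU2, Matrix.mul_one]; exact hV1
    calc |hA.eigenvalues i| * |(star V * S * V) i i| ≤ |hA.eigenvalues i| * 1 :=
          mul_le_mul_of_nonneg_left hb (abs_nonneg _)
      _ = |hA.eigenvalues i| := mul_one _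
  have h4 : (Matrix.diagonal ω * S).trace - c * S.trace ≤ ∑ i, |ω i - c| := by
    have ht : (Matrix.diagonal ω * S).trace = ∑ i, ω i * S i i := by
      simp [Matrix.trace, Matrix.diag, Matrix.diagonal_mul]
    have ht2 : S.trace = ∑ i, S i i := by simp [Matrix.trace, Matrix.diag]
    rw [ht, ht2, Finset.mul_sum, ← Finset.sum_sub_distrib]
    refine le_trans (le_trans (le_abs_self _) (Finset.abs_sum_le_sum_abs _ _))
      (Finset.sum_le_sum fun i _ => ?_)
    rw [show ω i * S i i - c * S i i = (ω i - c) * S i i by ring, abs_mul]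
    calc |ω i - c| * |S i i| ≤ |ω i - c| * 1 :=
          mul_le_mul_of_nonneg_left (hSentry i) (abs_nonneg _)
      _ = |ω i - c| := mul_one _
  have e1 : ∑ i, |hL.eigenvalues i - c|
      = ((Matrix.diagonal ω - G.adjMatrix ℝ) * S).trace - c * S.trace := by
    rw [h1, h2, Finset.mul_sum, ← Finset.sum_sub_distrib]
    exact (Finset.sum_congr rfl fun i _ => by rw [← hsabs i]; ring).symm
  have key : ∑ i, |hL.eigenvalues i - c| ≤ ∑ i, |ω i - c| + ∑ i, |hA.eigenvalues i| := by
    rw [e1, Matrix.sub_mul, Matrix.trace_sub]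
    have h3' := (abs_le.mp h3).1
    linarith
  have hrhs : (n : ℝ) * ((1 / (n : ℝ)) * ∑ i, |ω i - c|) = ∑ i, |ω i - c| := by
    field_simp
  rw [hrhs]
  exact key
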